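/- Let G be a finite group acting linearly on V over k with char k ≠ 2, and κ : V⊗V → kG an alternating bilinear map, κ(v₁,v₂) = Σ_g κ_g(v₁,v₂) g. If the quotient H_κ = T_k(V)#G / ⟨v₁⊗v₂ − v₂⊗v₁ − κ(v₁,v₂)⟩ satisfies the PBW property (gr H_κ ≅ S_k(V)#G), then κ is G-invariant and Σ_{σ ∈ Alt₃} κ_g(v_{σ(2)}, v_{σ(3)}) · (g·v_{σ(1)} − v_{σ(1)}) = 0 in V for all v₁,v₂,v₃ ∈ V and g ∈ G. -/

import Mathlib

/-- A presentation of `A` as the skew group algebra `S#G`. -/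
structure SkewPresentation (k S G A : Type*) [CommSemiring k] [Ring S] [Algebra k S]
    [Group G] [Ring A] [Algebra k A] (act : G →* S ≃ₐ[k] S) where
  ιS : S →ₐ[k] A
  ιG : G →* Aˣ
  comm : ∀ (g : G) (s : S), (ιG g : A) * ιS s = ιS (act g s) * (ιG g : A)
  bij : Function.Bijective fun f : G →₀ S => f.sum fun g s => ιS s * (ιG g : A)


private lemma list_prod_map_one {α M : Type*} [Monoid M] {f : α → M} :
    ∀ l : List α, (∀ j ∈ l, f j = 1) → (l.map f).prod = 1
  | [], _ => by simp
  | a :: l, h => by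
    rw [List.map_cons, List.prod_cons, h a (by simp),
      list_prod_map_one l (fun j hj => h j (by simp [hj])), one_mul]

private lemma list_prod_map_single {α M : Type*} [Monoid M] [DecidableEq α] {f : α → M} (i : α) :
    ∀ l : List α, (∀ j ∈ l, j ≠ i → f j = 1) → l.count i = 1 → (l.map f).prod = f i
  | [], _, hc => by simp at hc
  | a :: l, h, hc => by
    by_cases ha : a = i
    · subst ha
      have hc' : a ∉ l := by
        have : l.count a = 0 := by simpa [List.count_cons] using hc
        exact List.count_eq_zero.mp this
      rw [List.map_cons, List.prod_cons,
        list_prod_map_one l (fun j hj => h j (List.mem_cons_of_mem _ hj)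
          (by rintro rfl; exact hc' hj)), mul_one]
    · have hc' : l.count i = 1 := by simpa [List.count_cons, ha] using hc
      rw [List.map_cons, List.prod_cons, h a (by simp) ha, one_mul]
      exact list_prod_map_single i l (fun j hj hji => h j (by simp [hj]) hji) hc'



private lemma key_lemma {k V G H : Type*} [Field k] [AddCommGroup V] [Module k V]
    [Group G] [Fintype G] [Ring H] [Algebra k H] {d : ℕ}
    (b : Module.Basis (Fin d) k V) (act : G →* V ≃ₗ[k] V)
    (κ : V →ₗ[k] V →ₗ[k] MonoidAlgebra k G)
    (X : V →ₗ[k] H) (Γ : G → H) (T : MonoidAlgebra k G →ₐ[k] H)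
    (hT : ∀ g : G, T (MonoidAlgebra.of k G g) = Γ g)
    (hΓ : ∀ g h : G, Γ g * Γ h = Γ (g * h))
    (hcomm : ∀ (g : G) (v : V), Γ g * X v = X (act g v) * Γ g)
    (hXrel : ∀ v₁ v₂ : V, X v₁ * X v₂ = X v₂ * X v₁ + T (κ v₁ v₂))
    (hind : LinearIndependent k
      (fun p : Option (Fin d) × G => (p.1.elim 1 fun i => X (b i)) * Γ p.2)) :
    (∀ (g h : G) (u v : V), (κ (act g u) (act g v)).coeff (g * h * g⁻¹) = (κ u v).coeff h) ∧
    (∀ (g : G) (v₁ v₂ v₃ : V),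
      (κ v₂ v₃).coeff g • (act g v₁ - v₁) + (κ v₃ v₁).coeff g • (act g v₂ - v₂) +
        (κ v₁ v₂).coeff g • (act g v₃ - v₃) = 0) := by
  classical
  -- T expressed as a sum
  have hTsum : ∀ f : MonoidAlgebra k G, T f = ∑ w, f.coeff w • Γ w := by
    intro f
    have hf : (f : MonoidAlgebra k G) = ∑ w, MonoidAlgebra.single w (f.coeff w) := by
      ext m
      simp [MonoidAlgebra.coeff_sum, MonoidAlgebra.coeff_single, Finsupp.single_apply]
    conv_lhs => rw [hf]
    rw [map_sum]
    refine Finset.sum_congr rfl fun w _ => ?_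
    have h1 : MonoidAlgebra.single w (f.coeff w) = f.coeff w • (MonoidAlgebra.of k G w) := by
      simp [MonoidAlgebra.of_apply]
    rw [h1, map_smul, hT]
  -- commutator formula
  have hcom : ∀ u v : V, T (κ u v) = X u * X v - X v * X u := fun u v =>
    eq_sub_iff_add_eq.mpr (by rw [add_comm]; exact (hXrel u v).symm)
  -- sub-families linearly independent
  have hΓind : LinearIndependent k Γ := by
    have h1 := hind.comp (fun g : G => ((none : Option (Fin d)), g))
      (fun a c h => by simpa using h)
    have h2 : ((fun p : Option (Fin d) × G => (p.1.elim 1 fun i => X (b i)) * Γ p.2) ∘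
        fun g : G => ((none : Option (Fin d)), g)) = fun g => Γ g := by
      funext g; simp
    rw [h2] at h1
    exact h1
  have hXΓind : LinearIndependent k (fun p : Fin d × G => X (b p.1) * Γ p.2) := by
    have h1 := hind.comp (fun p : Fin d × G => ((some p.1 : Option (Fin d)), p.2))
      (fun a c h => by
        simp only [Prod.mk.injEq, Option.some_inj] at h
        exact Prod.ext h.1 h.2)
    have h2 : ((fun p : Option (Fin d) × G => (p.1.elim 1 fun i => X (b i)) * Γ p.2) ∘
        fun p : Fin d × G => ((some p.1 : Option (Fin d)), p.2))
        = fun p : Fin d × G => X (b p.1) * Γ p.2 := by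
      funext p; simp
    rw [h2] at h1
    exact h1
  constructor
  · intro g h u v
    have key : ∀ a c : V, Γ g * (X a * X c) = X (act g a) * X (act g c) * Γ g := by
      intro a c
      rw [← mul_assoc, hcomm, mul_assoc, hcomm, ← mul_assoc]
    have e1 : Γ g * T (κ u v) = T (κ (act g u) (act g v)) * Γ g := by
      rw [hcom u v, hcom (act g u) (act g v), mul_sub, sub_mul, key u v, key v u]
    rw [hTsum, hTsum, Finset.mul_sum, Finset.sum_mul] at e1
    simp only [mul_smul_comm, smul_mul_assoc, hΓ] at e1
    have eL : ∑ w, (κ u v).coeff w • Γ (g * w) = ∑ w, (κ u v).coeff (g⁻¹ * w) • Γ w :=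
      Fintype.sum_equiv (Equiv.mulLeft g) _ _ (fun w => by simp)
    have eR : ∑ w, (κ (act g u) (act g v)).coeff w • Γ (w * g)
        = ∑ w, (κ (act g u) (act g v)).coeff (w * g⁻¹) • Γ w :=
      Fintype.sum_equiv (Equiv.mulRight g) _ _ (fun w => by simp)
    rw [eL, eR] at e1
    have e0 : ∑ w, ((κ u v).coeff (g⁻¹ * w) - (κ (act g u) (act g v)).coeff (w * g⁻¹)) • Γ w = 0 := by
      simp only [sub_smul, Finset.sum_sub_distrib, e1, sub_self]
    have hz := Fintype.linearIndependent_iff.mp hΓind _ e0 (g * h)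
    rw [inv_mul_cancel_left] at hz
    exact (sub_eq_zero.mp hz).symm
  · intro g v₁ v₂ v₃
    have hc : ∀ (a : V) (f : MonoidAlgebra k G),
        T f * X a - X a * T f = ∑ w, X (f.coeff w • (act w a - a)) * Γ w := by
      intro a f
      rw [hTsum, Finset.sum_mul, Finset.mul_sum, ← Finset.sum_sub_distrib]
      refine Finset.sum_congr rfl fun w _ => ?_
      rw [smul_mul_assoc, hcomm, mul_smul_comm, ← smul_mul_assoc, ← smul_mul_assoc,
        ← sub_mul, ← smul_sub, ← map_sub, ← map_smul]
    have jac : (T (κ v₂ v₃) * X v₁ - X v₁ * T (κ v₂ v₃))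
        + (T (κ v₃ v₁) * X v₂ - X v₂ * T (κ v₃ v₁))
        + (T (κ v₁ v₂) * X v₃ - X v₃ * T (κ v₁ v₂)) = 0 := by
      rw [hcom v₂ v₃, hcom v₃ v₁, hcom v₁ v₂]; noncomm_ring
    rw [hc v₁ (κ v₂ v₃), hc v₂ (κ v₃ v₁), hc v₃ (κ v₁ v₂)] at jac
    have jac2 : ∑ w, X ((κ v₂ v₃).coeff w • (act w v₁ - v₁) + (κ v₃ v₁).coeff w • (act w v₂ - v₂)
        + (κ v₁ v₂).coeff w • (act w v₃ - v₃)) * Γ w = 0 := by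
      rw [← jac, ← Finset.sum_add_distrib, ← Finset.sum_add_distrib]
      exact Finset.sum_congr rfl fun w _ => by rw [map_add, map_add, add_mul, add_mul]
    have hXexp : ∀ u : V, X u = ∑ i, b.repr u i • X (b i) := by
      intro u
      conv_lhs => rw [← b.sum_repr u]
      rw [map_sum]
      exact Finset.sum_congr rfl fun i _ => by rw [map_smul]
    have jac3 : ∑ p : Fin d × G, b.repr ((κ v₂ v₃).coeff p.2 • (act p.2 v₁ - v₁)
        + (κ v₃ v₁).coeff p.2 • (act p.2 v₂ - v₂) + (κ v₁ v₂).coeff p.2 • (act p.2 v₃ - v₃)) p.1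
          • (X (b p.1) * Γ p.2) = 0 := by
      rw [Fintype.sum_prod_type, Finset.sum_comm]
      rw [← jac2]
      refine Finset.sum_congr rfl fun w _ => ?_
      rw [hXexp ((κ v₂ v₃).coeff w • (act w v₁ - v₁) + (κ v₃ v₁).coeff w • (act w v₂ - v₂)
        + (κ v₁ v₂).coeff w • (act w v₃ - v₃)), Finset.sum_mul]
      exact Finset.sum_congr rfl fun i _ => by rw [smul_mul_assoc]
    have hz := Fintype.linearIndependent_iff.mp hXΓind _ jac3
    have hrep : b.repr ((κ v₂ v₃).coeff g • (act g v₁ - v₁) + (κ v₃ v₁).coeff g • (act g v₂ - v₂)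
        + (κ v₁ v₂).coeff g • (act g v₃ - v₃)) = 0 := Finsupp.ext fun i => hz (i, g)
    exact (LinearEquiv.map_eq_zero_iff b.repr).mp hrep

/-- let `char k ≠ 2`, `G` finite acting linearly on `V` (finite
dimensional, with basis `b`), and `κ : V⊗V → kG` alternating bilinear with
components `κ_g(v₁,v₂) = (κ v₁ v₂) g`.  Form the Drinfeld Hecke algebra
`H_κ = T_k(V)#G / ⟨v₁⊗v₂ − v₂⊗v₁ − κ(v₁,v₂)⟩` (as a `RingQuot`).  If `H_κ`
has the PBW property — the PBW monomials `x^a · g` form a `k`-basis of `H_κ`,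
equivalently `gr H_κ ≅ S_k(V)#G` — then `κ` is `G`-invariant
(`κ_{ghg⁻¹}(g·u, g·v) = κ_h(u,v)`) and the mixed Jacobi identity
`Σ_{σ∈Alt₃} κ_g(v_{σ(2)},v_{σ(3)})·(g·v_{σ(1)} − v_{σ(1)}) = 0` holds. -/
theorem stmt18 {k V G A : Type*} [Field k] [AddCommGroup V] [Module k V]
    [Group G] [Finite G] [Ring A] [Algebra k A] {d : ℕ}
    (hchar : (2 : k) ≠ 0)
    (b : Module.Basis (Fin d) k V)
    (act : G →* V ≃ₗ[k] V)
    (actT : G →* TensorAlgebra k V ≃ₐ[k] TensorAlgebra k V)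
    (hactT : ∀ (g : G) (v : V),
      actT g (TensorAlgebra.ι k v) = TensorAlgebra.ι k (act g v))
    (pres : SkewPresentation k (TensorAlgebra k V) G A actT)
    (κ : V →ₗ[k] V →ₗ[k] MonoidAlgebra k G)
    (hκalt : ∀ v : V, κ v v = 0)
    -- the embedding of `kG` into `A`
    (ιKG : MonoidAlgebra k G →ₐ[k] A)
    (hιKG : ∀ g : G, ιKG (MonoidAlgebra.of k G g) = ((pres.ιG g : Aˣ) : A))
    -- the defining relations of `H_κ`
    (rel : A → A → Prop)
    (hrel : rel = fun x y => ∃ v₁ v₂ : V,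
      x = pres.ιS (TensorAlgebra.ι k v₁) * pres.ιS (TensorAlgebra.ι k v₂) ∧
      y = pres.ιS (TensorAlgebra.ι k v₂) * pres.ιS (TensorAlgebra.ι k v₁) +
            ιKG (κ v₁ v₂))
    -- the PBW property: the PBW monomials `x₁^{a₁} ⋯ x_d^{a_d} · g` form a basis of `H_κ`
    (hPBW :
      LinearIndependent k (fun p : (Fin d → ℕ) × G =>
        (((List.finRange d).map fun i =>
            (RingQuot.mkAlgHom k rel) (pres.ιS (TensorAlgebra.ι k (b i))) ^ p.1 i).prod) *
          (RingQuot.mkAlgHom k rel) ((pres.ιG p.2 : Aˣ) : A)) ∧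
      Submodule.span k (Set.range (fun p : (Fin d → ℕ) × G =>
        (((List.finRange d).map fun i =>
            (RingQuot.mkAlgHom k rel) (pres.ιS (TensorAlgebra.ι k (b i))) ^ p.1 i).prod) *
          (RingQuot.mkAlgHom k rel) ((pres.ιG p.2 : Aˣ) : A))) = ⊤) :
    -- `κ` is `G`-invariant …
    (∀ (g h : G) (u v : V), (κ (act g u) (act g v)).coeff (g * h * g⁻¹) = (κ u v).coeff h) ∧
    -- … and the mixed Jacobi condition holds
    (∀ (g : G) (v₁ v₂ v₃ : V),
      (κ v₂ v₃).coeff g • (act g v₁ - v₁) +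
        (κ v₃ v₁).coeff g • (act g v₂ - v₂) +
        (κ v₁ v₂).coeff g • (act g v₃ - v₃) = 0) := by
  classical
  cases nonempty_fintype G
  set π : A →ₐ[k] RingQuot rel := RingQuot.mkAlgHom k rel with hπ
  set X : V →ₗ[k] RingQuot rel :=
    π.toLinearMap ∘ₗ pres.ιS.toLinearMap ∘ₗ TensorAlgebra.ι k with hX
  have hXapp : ∀ v : V, X v = π (pres.ιS (TensorAlgebra.ι k v)) := fun v => rfl
  set Γ : G → RingQuot rel := fun g => π ((pres.ιG g : Aˣ) : A) with hΓdef
  -- linear independence of degree ≤ 1 PBW monomials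
  have hinj : Function.Injective (fun p : Option (Fin d) × G =>
      ((p.1.elim 0 fun i => Pi.single i 1 : Fin d → ℕ), p.2)) := by
    rintro ⟨o₁, g₁⟩ ⟨o₂, g₂⟩ hpq
    simp only [Prod.mk.injEq] at hpq
    obtain ⟨h1, h2⟩ := hpq
    subst h2
    match o₁, o₂ with
    | none, none => rfl
    | none, some i =>
        exfalso
        have := congrFun h1 i
        simp [Pi.single_eq_same] at this
    | some i, none =>
        exfalso
        have := congrFun h1 i
        simp [Pi.single_eq_same] at this
    | some i, some j =>
        have hij : i = j := by
          by_contra hne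
          have := congrFun h1 i
          simp [Pi.single_eq_same, Pi.single_eq_of_ne hne] at this
        subst hij; rfl
  have hind0 := hPBW.1.comp _ hinj
  have hfam : ((fun p : (Fin d → ℕ) × G =>
        (((List.finRange d).map fun i => π (pres.ιS (TensorAlgebra.ι k (b i))) ^ p.1 i).prod) *
          π ((pres.ιG p.2 : Aˣ) : A)) ∘ (fun p : Option (Fin d) × G =>
        ((p.1.elim 0 fun i => Pi.single i 1 : Fin d → ℕ), p.2)))
      = fun p : Option (Fin d) × G => (p.1.elim 1 fun i => X (b i)) * Γ p.2 := by
    funext p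
    obtain ⟨o, g⟩ := p
    match o with
    | none =>
        simp only [Function.comp_apply, Option.elim]
        rw [list_prod_map_one (List.finRange d) (fun j _ => by simp)]
    | some i =>
        simp only [Function.comp_apply, Option.elim]
        rw [list_prod_map_single i (List.finRange d)
          (fun j _ hj => by simp [Pi.single_eq_of_ne hj])
          (List.count_eq_one_of_mem (List.nodup_finRange d) (List.mem_finRange i))]
        rw [Pi.single_eq_same, pow_one, hXapp]
  rw [hfam] at hind0
  -- apply the key lemma
  refine key_lemma b act κ X Γ (π.comp ιKG) ?_ ?_ ?_ ?_ hind0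
  · intro g
    simp only [AlgHom.comp_apply, hιKG]
    rfl
  · intro g h
    rw [← map_mul, ← Units.val_mul, ← map_mul]
  · intro g v
    rw [hXapp, hXapp, ← map_mul, ← map_mul, pres.comm, hactT]
  · intro v₁ v₂
    have hr : rel (pres.ιS (TensorAlgebra.ι k v₁) * pres.ιS (TensorAlgebra.ι k v₂))
        (pres.ιS (TensorAlgebra.ι k v₂) * pres.ιS (TensorAlgebra.ι k v₁) + ιKG (κ v₁ v₂)) := by
      rw [hrel]; exact ⟨v₁, v₂, rfl, rfl⟩
    have h0 := RingQuot.mkAlgHom_rel k hr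
    simp only [map_mul, map_add] at h0
    simp only [hXapp, AlgHom.comp_apply]
    exact h0
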